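/- Conditional on the event that a_1 < k and a_1 is not the maximum of (a_1, a_2, a_3), where a_1, a_2, a_3 are i.i.d. uniform on [0,1] and k ∈ (0,1], the expected value of max(a_2, a_3) is strictly greater than 2/3 (the unconditional expected maximum of two uniform draws). -/

import Mathlib

open MeasureTheory

noncomputable def muu : Measure ℝ := (volume : Measure ℝ).restrict (Set.Icc 0 1)

instance muu_prob : IsProbabilityMeasure muu := ⟨by simp [muu, Real.volume_Icc]⟩

lemma reduce (F : (Fin 3 → ℝ) → ℝ) (hF : Measurable F) (hb : ∀ a, |F a| ≤ 1) :
    ∫ a, F a ∂(Measure.pi fun _ : Fin 3 => muu)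
      = ∫ t, (∫ x, (∫ y, F ![t, x, y] ∂muu) ∂muu) ∂muu := by
  have h1 := measurePreserving_piFinSuccAbove (fun _ : Fin 3 => muu) 0
  have h2 := measurePreserving_finTwoArrow muu
  set e1 := MeasurableEquiv.piFinSuccAbove (fun _ : Fin 3 => ℝ) 0
  set e2 := (MeasurableEquiv.finTwoArrow : (Fin 2 → ℝ) ≃ᵐ ℝ × ℝ)
  have step1 : ∫ a, F a ∂(Measure.pi fun _ : Fin 3 => muu)
      = ∫ p, F (e1.symm p) ∂(muu.prod (Measure.pi fun _ : Fin 2 => muu)) := by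
    rw [← h1.integral_comp' (fun p => F (e1.symm p))]
    simp
  rw [step1]
  rw [MeasureTheory.integral_prod]
  · congr 1 with t
    have step2 : ∫ g, F (e1.symm (t, g)) ∂(Measure.pi fun _ : Fin 2 => muu)
        = ∫ q, F (e1.symm (t, e2.symm q)) ∂(muu.prod muu) := by
      rw [← h2.integral_comp' (fun q => F (e1.symm (t, e2.symm q)))]
      simp
    rw [step2, MeasureTheory.integral_prod]
    · congr 1 with x
      congr 1 with y
      congr 1
      simp only [e1, e2, MeasurableEquiv.piFinSuccAbove, MeasurableEquiv.finTwoArrow]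
      funext i
      fin_cases i <;> rfl
    · refine Integrable.mono' (integrable_const 1) ?_ (ae_of_all _ fun q => by
        simpa using hb _)
      exact ((hF.comp e1.symm.measurable).comp
        (measurable_const.prodMk e2.symm.measurable)).aestronglyMeasurable
  · refine Integrable.mono' (integrable_const 1) ?_ (ae_of_all _ fun p => by simpa using hb _)
    exact (hF.comp e1.symm.measurable).aestronglyMeasurable

lemma muu_interval (g : ℝ → ℝ) : ∫ y, g y ∂muu = ∫ y in (0:ℝ)..1, g y := by
  rw [intervalIntegral.integral_of_le zero_le_one, muu,
    ← MeasureTheory.integral_Icc_eq_integral_Ioc]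

lemma ii {g : ℝ → ℝ} (hg : Measurable g) {C : ℝ}
    (hb : ∀ y ∈ Set.uIcc 0 1, |g y| ≤ C) {a b : ℝ}
    (ha : a ∈ Set.uIcc (0:ℝ) 1) (hbb : b ∈ Set.uIcc (0:ℝ) 1) :
    IntervalIntegrable g volume a b := by
  rw [intervalIntegrable_iff]
  refine Integrable.mono' (g := fun _ => C) (integrableOn_const ?_)
    hg.aestronglyMeasurable.restrict ?_
  · exact measure_Ioc_lt_top.ne
  · filter_upwards [ae_restrict_mem measurableSet_uIoc] with y hy
    exact hb y (Set.uIcc_subset_uIcc ha hbb (Set.uIoc_subset_uIcc hy))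

lemma congr_Ioc {f g : ℝ → ℝ} {a b : ℝ} (hab : a ≤ b)
    (h : ∀ y ∈ Set.Ioc a b, f y = g y) :
    ∫ y in a..b, f y = ∫ y in a..b, g y := by
  apply intervalIntegral.integral_congr_ae
  exact MeasureTheory.ae_of_all _ fun y hy => h y (by rwa [Set.uIoc_of_le hab] at hy)

open intervalIntegral in
lemma eval1 {k t x : ℝ} (ht : t ∈ Set.Icc (0:ℝ) 1) (hx : x ∈ Set.Icc (0:ℝ) 1) :
    (∫ y, (if t < k ∧ t < max x y then max 0 (min (max x y) 1) else 0) ∂muu)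
      = if t < k then (if t < x then (1+x^2)/2 else (1-t^2)/2) else 0 := by
  obtain ⟨ht0, ht1⟩ := ht; obtain ⟨hx0, hx1⟩ := hx
  rw [muu_interval]
  have hmeas : Measurable fun y : ℝ =>
      (if t < k ∧ t < max x y then max 0 (min (max x y) 1) else 0) := by
    apply Measurable.ite _ _ measurable_const
    · rw [Set.setOf_and]
      exact (MeasurableSet.const _).inter
        (measurableSet_lt measurable_const (measurable_const.max measurable_id))
    · exact measurable_const.max ((measurable_const.max measurable_id).min measurable_const)
  have hbd : ∀ y ∈ Set.uIcc (0:ℝ) 1,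
      |(if t < k ∧ t < max x y then max 0 (min (max x y) 1) else 0)| ≤ 1 := by
    intro y _
    split
    · rw [abs_of_nonneg (le_max_left _ _)]
      exact max_le zero_le_one (min_le_right _ _)
    · simp
  by_cases hk : t < k
  · rw [if_pos hk]
    by_cases htx : t < x
    · rw [if_pos htx]
      have hx01 : x ∈ Set.uIcc (0:ℝ) 1 := by
        rw [Set.uIcc_of_le zero_le_one]; exact ⟨hx0, hx1⟩
      rw [← integral_add_adjacent_intervals (b := x)
        (ii hmeas hbd Set.left_mem_uIcc hx01) (ii hmeas hbd hx01 Set.right_mem_uIcc)]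
      have h1 : ∫ y in (0:ℝ)..x, (if t < k ∧ t < max x y then max 0 (min (max x y) 1) else 0)
          = ∫ _y in (0:ℝ)..x, x := by
        refine congr_Ioc hx0 fun y hy => ?_
        rw [max_eq_left hy.2]
        rw [if_pos ⟨hk, htx⟩, min_eq_left hx1, max_eq_right hx0]
      have h2 : ∫ y in x..(1:ℝ), (if t < k ∧ t < max x y then max 0 (min (max x y) 1) else 0)
          = ∫ y in x..(1:ℝ), y := by
        refine congr_Ioc hx1 fun y hy => ?_
        rw [max_eq_right hy.1.le]
        rw [if_pos ⟨hk, lt_of_lt_of_le htx hy.1.le⟩, min_eq_left hy.2,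
          max_eq_right (hx0.trans hy.1.le)]
      rw [h1, h2, integral_id]
      simp; ring
    · rw [if_neg htx]
      push_neg at htx
      have ht01 : t ∈ Set.uIcc (0:ℝ) 1 := by
        rw [Set.uIcc_of_le zero_le_one]; exact ⟨ht0, ht1⟩
      rw [← integral_add_adjacent_intervals (b := t)
        (ii hmeas hbd Set.left_mem_uIcc ht01) (ii hmeas hbd ht01 Set.right_mem_uIcc)]
      have h1 : ∫ y in (0:ℝ)..t, (if t < k ∧ t < max x y then max 0 (min (max x y) 1) else 0)
          = ∫ _y in (0:ℝ)..t, (0:ℝ) := by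
        refine congr_Ioc ht0 fun y hy => ?_
        rw [if_neg]
        rintro ⟨-, hlt⟩
        exact absurd hlt (not_lt.2 (max_le htx hy.2))
      have h2 : ∫ y in t..(1:ℝ), (if t < k ∧ t < max x y then max 0 (min (max x y) 1) else 0)
          = ∫ y in t..(1:ℝ), y := by
        refine congr_Ioc ht1 fun y hy => ?_
        have hmax : max x y = y := max_eq_right (htx.trans hy.1.le)
        rw [hmax, if_pos ⟨hk, hy.1⟩, min_eq_left hy.2, max_eq_right (ht0.trans hy.1.le)]
      rw [h1, h2, integral_id]
      simp
  · rw [if_neg hk]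
    rw [congr_Ioc zero_le_one (g := fun _ => (0:ℝ)) fun y _ => if_neg (fun h => hk h.1)]
    simp

open intervalIntegral in
lemma eval1' {k t x : ℝ} (ht : t ∈ Set.Icc (0:ℝ) 1) (hx : x ∈ Set.Icc (0:ℝ) 1) :
    (∫ y, (if t < k ∧ t < max x y then (1:ℝ) else 0) ∂muu)
      = if t < k then (if t < x then 1 else 1-t) else 0 := by
  obtain ⟨ht0, ht1⟩ := ht; obtain ⟨hx0, hx1⟩ := hx
  rw [muu_interval]
  have hmeas : Measurable fun y : ℝ =>
      (if t < k ∧ t < max x y then (1:ℝ) else 0) := by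
    apply Measurable.ite _ measurable_const measurable_const
    rw [Set.setOf_and]
    exact (MeasurableSet.const _).inter
      (measurableSet_lt measurable_const (measurable_const.max measurable_id))
  have hbd : ∀ y ∈ Set.uIcc (0:ℝ) 1,
      |(if t < k ∧ t < max x y then (1:ℝ) else 0)| ≤ 1 := by
    intro y _; split <;> simp
  by_cases hk : t < k
  · rw [if_pos hk]
    by_cases htx : t < x
    · rw [if_pos htx]
      rw [congr_Ioc zero_le_one (g := fun _ => (1:ℝ)) fun y hy =>
        if_pos ⟨hk, lt_of_lt_of_le htx (le_max_left _ _)⟩]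
      simp
    · rw [if_neg htx]
      push_neg at htx
      have ht01 : t ∈ Set.uIcc (0:ℝ) 1 := by
        rw [Set.uIcc_of_le zero_le_one]; exact ⟨ht0, ht1⟩
      rw [← integral_add_adjacent_intervals (b := t)
        (ii hmeas hbd Set.left_mem_uIcc ht01) (ii hmeas hbd ht01 Set.right_mem_uIcc)]
      have h1 : ∫ y in (0:ℝ)..t, (if t < k ∧ t < max x y then (1:ℝ) else 0)
          = ∫ _y in (0:ℝ)..t, (0:ℝ) :=
        congr_Ioc ht0 fun y hy => if_neg (fun h => absurd h.2 (not_lt.2 (max_le htx hy.2)))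
      have h2 : ∫ y in t..(1:ℝ), (if t < k ∧ t < max x y then (1:ℝ) else 0)
          = ∫ _y in t..(1:ℝ), (1:ℝ) :=
        congr_Ioc ht1 fun y hy =>
          if_pos ⟨hk, lt_of_lt_of_le hy.1 (le_max_right _ _)⟩
      rw [h1, h2]
      simp
  · rw [if_neg hk]
    rw [congr_Ioc zero_le_one (g := fun _ => (0:ℝ)) fun y _ => if_neg (fun h => hk h.1)]
    simp

open intervalIntegral in
lemma eval2 {k t : ℝ} (ht : t ∈ Set.Icc (0:ℝ) 1) :
    (∫ x, (if t < k then (if t < x then (1+x^2)/2 else (1-t^2)/2) else 0) ∂muu)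
      = if t < k then 2/3*(1-t^3) else 0 := by
  obtain ⟨ht0, ht1⟩ := ht
  rw [muu_interval]
  by_cases hk : t < k
  · simp only [if_pos hk]
    have hmeas : Measurable fun x : ℝ =>
        (if t < x then (1+x^2)/2 else (1-t^2)/2) := by
      apply Measurable.ite (measurableSet_lt measurable_const measurable_id)
      · exact ((measurable_id.pow_const 2).const_add 1).div_const 2
      · exact measurable_const
    have hbd : ∀ x ∈ Set.uIcc (0:ℝ) 1,
        |(if t < x then (1+x^2)/2 else (1-t^2)/2)| ≤ 1 := by
      intro x hx
      rw [Set.uIcc_of_le zero_le_one] at hx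
      split
      · rw [abs_of_nonneg (by positivity)]
        nlinarith [hx.1, hx.2]
      · rw [abs_of_nonneg (by nlinarith)]
        nlinarith
    have ht01 : t ∈ Set.uIcc (0:ℝ) 1 := by
      rw [Set.uIcc_of_le zero_le_one]; exact ⟨ht0, ht1⟩
    rw [← integral_add_adjacent_intervals (b := t)
      (ii hmeas hbd Set.left_mem_uIcc ht01) (ii hmeas hbd ht01 Set.right_mem_uIcc)]
    have h1 : ∫ x in (0:ℝ)..t, (if t < x then (1+x^2)/2 else (1-t^2)/2)
        = ∫ _x in (0:ℝ)..t, (1-t^2)/2 :=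
      congr_Ioc ht0 fun x hx => if_neg (not_lt.2 hx.2)
    have h2 : ∫ x in t..(1:ℝ), (if t < x then (1+x^2)/2 else (1-t^2)/2)
        = ∫ x in t..(1:ℝ), (1/2 + (1/2)*x^2) := by
      refine congr_Ioc ht1 fun x hx => ?_
      rw [if_pos hx.1]; ring
    rw [h1, h2, integral_add intervalIntegrable_const
      ((intervalIntegrable_pow 2).const_mul _), intervalIntegral.integral_const_mul, integral_pow]
    simp
    ring
  · simp only [if_neg hk]
    simp

open intervalIntegral in
lemma eval2' {k t : ℝ} (ht : t ∈ Set.Icc (0:ℝ) 1) :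
    (∫ x, (if t < k then (if t < x then (1:ℝ) else 1-t) else 0) ∂muu)
      = if t < k then 1-t^2 else 0 := by
  obtain ⟨ht0, ht1⟩ := ht
  rw [muu_interval]
  by_cases hk : t < k
  · simp only [if_pos hk]
    have hmeas : Measurable fun x : ℝ => (if t < x then (1:ℝ) else 1-t) :=
      Measurable.ite (measurableSet_lt measurable_const measurable_id)
        measurable_const measurable_const
    have hbd : ∀ x ∈ Set.uIcc (0:ℝ) 1, |(if t < x then (1:ℝ) else 1-t)| ≤ 1 := by
      intro x _
      split
      · simp
      · rw [abs_of_nonneg (by linarith)]; linarith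
    have ht01 : t ∈ Set.uIcc (0:ℝ) 1 := by
      rw [Set.uIcc_of_le zero_le_one]; exact ⟨ht0, ht1⟩
    rw [← integral_add_adjacent_intervals (b := t)
      (ii hmeas hbd Set.left_mem_uIcc ht01) (ii hmeas hbd ht01 Set.right_mem_uIcc)]
    have h1 : ∫ x in (0:ℝ)..t, (if t < x then (1:ℝ) else 1-t)
        = ∫ _x in (0:ℝ)..t, (1-t) :=
      congr_Ioc ht0 fun x hx => if_neg (not_lt.2 hx.2)
    have h2 : ∫ x in t..(1:ℝ), (if t < x then (1:ℝ) else 1-t)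
        = ∫ _x in t..(1:ℝ), (1:ℝ) :=
      congr_Ioc ht1 fun x hx => if_pos hx.1
    rw [h1, h2]
    simp
    ring
  · simp only [if_neg hk]
    simp

open intervalIntegral in
lemma eval3 {k : ℝ} (hk0 : 0 < k) (hk1 : k ≤ 1) :
    (∫ t, (if t < k then 2/3*(1-t^3) else 0) ∂muu) = 2/3*(k - k^4/4) := by
  rw [muu_interval]
  have hmeas : Measurable fun t : ℝ => (if t < k then 2/3*(1-t^3) else 0) := by
    apply Measurable.ite (measurableSet_lt measurable_id measurable_const)
    · exact (((measurable_id.pow_const 3).const_sub 1).const_mul _)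
    · exact measurable_const
  have hbd : ∀ t ∈ Set.uIcc (0:ℝ) 1, |(if t < k then 2/3*(1-t^3) else 0)| ≤ 1 := by
    intro t htm
    rw [Set.uIcc_of_le zero_le_one] at htm
    have hc0 : (0:ℝ) ≤ t^3 := pow_nonneg htm.1 3
    have hc1 : t^3 ≤ 1 := pow_le_one₀ htm.1 htm.2
    split
    · rw [abs_of_nonneg (by linarith)]
      linarith
    · simp
  have hk01 : k ∈ Set.uIcc (0:ℝ) 1 := by
    rw [Set.uIcc_of_le zero_le_one]; exact ⟨hk0.le, hk1⟩
  rw [← integral_add_adjacent_intervals (b := k)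
    (ii hmeas hbd Set.left_mem_uIcc hk01) (ii hmeas hbd hk01 Set.right_mem_uIcc)]
  have hne : ∀ᵐ t : ℝ ∂volume, t ≠ k := by
    rw [ae_iff]
    simp only [ne_eq, not_not, Set.setOf_eq_eq_singleton]
    exact measure_singleton k
  have h1 : ∫ t in (0:ℝ)..k, (if t < k then 2/3*(1-t^3) else 0)
      = ∫ t in (0:ℝ)..k, 2/3*(1-t^3) := by
    apply intervalIntegral.integral_congr_ae
    filter_upwards [hne] with t htk hmem
    rw [Set.uIoc_of_le hk0.le] at hmem
    exact if_pos (lt_of_le_of_ne hmem.2 htk)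
  have h2 : ∫ t in k..(1:ℝ), (if t < k then 2/3*(1-t^3) else 0)
      = ∫ _t in k..(1:ℝ), (0:ℝ) :=
    congr_Ioc hk1 fun t ht => if_neg (not_lt.2 ht.1.le)
  rw [h1, h2, intervalIntegral.integral_const_mul,
    integral_sub intervalIntegrable_const (intervalIntegrable_pow 3), integral_pow]
  simp
  ring

open intervalIntegral in
lemma eval3' {k : ℝ} (hk0 : 0 < k) (hk1 : k ≤ 1) :
    (∫ t, (if t < k then 1-t^2 else 0) ∂muu) = k - k^3/3 := by
  rw [muu_interval]
  have hmeas : Measurable fun t : ℝ => (if t < k then 1-t^2 else 0) := by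
    apply Measurable.ite (measurableSet_lt measurable_id measurable_const)
    · exact ((measurable_id.pow_const 2).const_sub 1)
    · exact measurable_const
  have hbd : ∀ t ∈ Set.uIcc (0:ℝ) 1, |(if t < k then 1-t^2 else 0)| ≤ 1 := by
    intro t htm
    rw [Set.uIcc_of_le zero_le_one] at htm
    split
    · rw [abs_of_nonneg (by nlinarith [htm.1, htm.2])]
      nlinarith [htm.1, htm.2]
    · simp
  have hk01 : k ∈ Set.uIcc (0:ℝ) 1 := by
    rw [Set.uIcc_of_le zero_le_one]; exact ⟨hk0.le, hk1⟩
  rw [← integral_add_adjacent_intervals (b := k)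
    (ii hmeas hbd Set.left_mem_uIcc hk01) (ii hmeas hbd hk01 Set.right_mem_uIcc)]
  have hne : ∀ᵐ t : ℝ ∂volume, t ≠ k := by
    rw [ae_iff]
    simp only [ne_eq, not_not, Set.setOf_eq_eq_singleton]
    exact measure_singleton k
  have h1 : ∫ t in (0:ℝ)..k, (if t < k then 1-t^2 else 0)
      = ∫ t in (0:ℝ)..k, (1-t^2) := by
    apply intervalIntegral.integral_congr_ae
    filter_upwards [hne] with t htk hmem
    rw [Set.uIoc_of_le hk0.le] at hmem
    exact if_pos (lt_of_le_of_ne hmem.2 htk)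
  have h2 : ∫ t in k..(1:ℝ), (if t < k then 1-t^2 else 0)
      = ∫ _t in k..(1:ℝ), (0:ℝ) :=
    congr_Ioc hk1 fun t ht => if_neg (not_lt.2 ht.1.le)
  rw [h1, h2,
    integral_sub intervalIntegrable_const (intervalIntegrable_pow 2), integral_pow]
  simp
  ring

/-- Conditional on the event `{a₁ < k and a₁ < max(a₂,a₃)}` (three i.i.d. uniform draws on
`[0,1]`, `k ∈ (0,1]`), the expected value of `max(a₂,a₃)` is strictly greater than `2/3`,
the unconditional expected maximum of two uniform draws: the integral of `max(a₂,a₃)` over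
the event exceeds `2/3` times the probability of the event. -/
theorem conditional_expected_max_gt (k : ℝ) (hk0 : 0 < k) (hk1 : k ≤ 1) :
    (2 / 3 : ℝ) *
      ((Measure.pi fun _ : Fin 3 => (volume : Measure ℝ).restrict (Set.Icc 0 1))
        {a | a 0 < k ∧ a 0 < max (a 1) (a 2)}).toReal
    < ∫ a in {a : Fin 3 → ℝ | a 0 < k ∧ a 0 < max (a 1) (a 2)}, max (a 1) (a 2)
        ∂(Measure.pi fun _ : Fin 3 => (volume : Measure ℝ).restrict (Set.Icc 0 1)) := by
  have hmu_ae : ∀ᵐ x ∂muu, x ∈ Set.Icc (0:ℝ) 1 := ae_restrict_mem measurableSet_Icc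
  set π : Measure (Fin 3 → ℝ) := Measure.pi fun _ : Fin 3 => muu with hπ
  set E : Set (Fin 3 → ℝ) := {a | a 0 < k ∧ a 0 < max (a 1) (a 2)} with hEdef
  have hE : MeasurableSet E := by
    rw [hEdef, Set.setOf_and]
    exact (measurableSet_lt (measurable_pi_apply 0) measurable_const).inter
      (measurableSet_lt (measurable_pi_apply 0)
        ((measurable_pi_apply 1).max (measurable_pi_apply 2)))
  set F₁ : (Fin 3 → ℝ) → ℝ := fun a =>
    if a 0 < k ∧ a 0 < max (a 1) (a 2) then max 0 (min (max (a 1) (a 2)) 1) else 0 with hF₁def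
  set F₂ : (Fin 3 → ℝ) → ℝ := fun a =>
    if a 0 < k ∧ a 0 < max (a 1) (a 2) then (1:ℝ) else 0 with hF₂def
  have hF₁m : Measurable F₁ :=
    Measurable.ite hE (measurable_const.max
      (((measurable_pi_apply 1).max (measurable_pi_apply 2)).min measurable_const))
      measurable_const
  have hF₂m : Measurable F₂ := Measurable.ite hE measurable_const measurable_const
  have hF₁b : ∀ a, |F₁ a| ≤ 1 := by
    intro a; rw [hF₁def]; dsimp only
    split
    · rw [abs_of_nonneg (le_max_left _ _)]
      exact max_le zero_le_one (min_le_right _ _)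
    · simp
  have hF₂b : ∀ a, |F₂ a| ≤ 1 := by
    intro a; rw [hF₂def]; dsimp only
    split <;> simp
  -- a.e. membership in the unit cube
  haveI : IsProbabilityMeasure π := by rw [hπ]; infer_instance
  have hcube : ∀ᵐ a ∂π, ∀ i, a i ∈ Set.Icc (0:ℝ) 1 := by
    have hS : π (Set.univ.pi fun _ : Fin 3 => Set.Icc (0:ℝ) 1) = 1 := by
      rw [hπ, Measure.pi_pi]
      simp [muu, Measure.restrict_apply, Real.volume_Icc]
    have hc : π (Set.univ.pi fun _ : Fin 3 => Set.Icc (0:ℝ) 1)ᶜ = 0 := by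
      rw [measure_compl (MeasurableSet.univ_pi fun _ => measurableSet_Icc)
        (by simp), hS, measure_univ, tsub_self]
    refine ae_iff.2 (measure_mono_null ?_ hc)
    intro a ha
    simp only [Set.mem_compl_iff, Set.mem_univ_pi]
    simpa using ha
  -- the probability equals the integral of F₂
  have keyP : (π E).toReal = ∫ a, F₂ a ∂π := by
    have hind : F₂ = E.indicator (fun _ => (1:ℝ)) := by
      funext a
      rw [Set.indicator_apply, hF₂def]
      dsimp only
      by_cases h : a 0 < k ∧ a 0 < max (a 1) (a 2)
      · rw [if_pos h, if_pos (show a ∈ E from h)]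
      · rw [if_neg h, if_neg (show a ∉ E from h)]
    rw [hind, MeasureTheory.integral_indicator_const _ hE, smul_eq_mul, mul_one]
    rfl
  -- the set integral equals the integral of F₁
  have keyI : (∫ a in E, max (a 1) (a 2) ∂π) = ∫ a, F₁ a ∂π := by
    rw [← MeasureTheory.integral_indicator hE]
    refine integral_congr_ae ?_
    filter_upwards [hcube] with a ha
    by_cases hmem : a ∈ E
    · have hmem' : a 0 < k ∧ a 0 < max (a 1) (a 2) := hmem
      rw [Set.indicator_of_mem hmem, hF₁def]
      dsimp only
      rw [if_pos hmem']
      have h1 : max (a 1) (a 2) ≤ 1 := max_le (ha 1).2 (ha 2).2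
      have h0 : (0:ℝ) ≤ max (a 1) (a 2) := le_trans (ha 1).1 (le_max_left _ _)
      rw [min_eq_left h1, max_eq_right h0]
    · have hmem' : ¬(a 0 < k ∧ a 0 < max (a 1) (a 2)) := hmem
      rw [Set.indicator_of_notMem hmem, hF₁def]
      dsimp only
      rw [if_neg hmem']
  -- evaluate the two integrals
  have hval₁ : ∀ t x y : ℝ, F₁ ![t, x, y]
      = (if t < k ∧ t < max x y then max 0 (min (max x y) 1) else 0) := by
    intro t x y
    rw [hF₁def]
    simp [Matrix.cons_val_zero, Matrix.cons_val_one, Matrix.head_cons]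
  have hval₂ : ∀ t x y : ℝ, F₂ ![t, x, y]
      = (if t < k ∧ t < max x y then (1:ℝ) else 0) := by
    intro t x y
    rw [hF₂def]
    simp [Matrix.cons_val_zero, Matrix.cons_val_one, Matrix.head_cons]
  have int₁ : ∫ a, F₁ a ∂π = 2/3*(k - k^4/4) := by
    rw [hπ, reduce F₁ hF₁m hF₁b]
    have inner : ∀ᵐ t ∂muu, (∫ x, (∫ y, F₁ ![t, x, y] ∂muu) ∂muu)
        = if t < k then 2/3*(1-t^3) else 0 := by
      filter_upwards [hmu_ae] with t ht
      have h : (∫ x, (∫ y, F₁ ![t, x, y] ∂muu) ∂muu)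
          = ∫ x, (if t < k then (if t < x then (1+x^2)/2 else (1-t^2)/2) else 0) ∂muu := by
        refine integral_congr_ae ?_
        filter_upwards [hmu_ae] with x hx
        rw [show (∫ y, F₁ ![t, x, y] ∂muu)
            = ∫ y, (if t < k ∧ t < max x y then max 0 (min (max x y) 1) else 0) ∂muu from
          integral_congr_ae (ae_of_all _ fun y => hval₁ t x y)]
        exact eval1 ht hx
      rw [h, eval2 ht]
    rw [integral_congr_ae inner, eval3 hk0 hk1]
  have int₂ : ∫ a, F₂ a ∂π = k - k^3/3 := by
    rw [hπ, reduce F₂ hF₂m hF₂b]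
    have inner : ∀ᵐ t ∂muu, (∫ x, (∫ y, F₂ ![t, x, y] ∂muu) ∂muu)
        = if t < k then 1-t^2 else 0 := by
      filter_upwards [hmu_ae] with t ht
      have h : (∫ x, (∫ y, F₂ ![t, x, y] ∂muu) ∂muu)
          = ∫ x, (if t < k then (if t < x then (1:ℝ) else 1-t) else 0) ∂muu := by
        refine integral_congr_ae ?_
        filter_upwards [hmu_ae] with x hx
        rw [show (∫ y, F₂ ![t, x, y] ∂muu)
            = ∫ y, (if t < k ∧ t < max x y then (1:ℝ) else 0) ∂muu from
          integral_congr_ae (ae_of_all _ fun y => hval₂ t x y)]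
        exact eval1' ht hx
      rw [h, eval2' ht]
    rw [integral_congr_ae inner, eval3' hk0 hk1]
  show (2 / 3 : ℝ) * (π E).toReal < ∫ a in E, max (a 1) (a 2) ∂π
  rw [keyP, keyI, int₁, int₂]
  nlinarith [pow_pos hk0 3]
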